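/- Let C ⊆ ℝⁿ be a forward invariant set for the system ẋ = f(x), where f : ℝⁿ → ℝⁿ is C². Suppose there exist T > 0 and ε > 0 such that for every x ∈ C and every unit vector θ (‖θ‖ = 1) with K_j(x,θ) ≥ 0 for all j ∈ {1,…,m}, the following holds for each i: if 0 ≤ K_i(x,θ) ≤ ε, then the total derivative of K_i at (x,θ) applied to the vector (f(x), (Df(x) − ⟨θ, Df(x)θ⟩·I)θ) is ≥ ε/T. Then the system is strictly differentially positive on C: for every solution x(·) of ẋ = f(x) with x(0) ∈ C, every solution δx(·) of the variational equation d/dt δx(t) = Df(x(t)) δx(t) with δx(0) ∈ K(x(0))\{0}, and every t ≥ T, one has K_i(x(t), δx(t)/‖δx(t)‖) ≥ ε for all i, i.e. δx(t) ∈ K_ε(x(t)). -/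

import Mathlib

open Set

section AuxStrictDiffPos

private lemma sdp_scalar_reach {g g' : ℝ → ℝ} {T ε : ℝ} (hT : 0 < T) (hε : 0 < ε)
    (hg : ∀ t, HasDerivAt g (g' t) t)
    (h0 : 0 ≤ g 0)
    (hbound : ∀ t, 0 ≤ t → g t ≤ ε → ε / T ≤ g' t) :
    ∀ t, T ≤ t → ε ≤ g t := by
  have hgc : Continuous g := continuous_iff_continuousAt.2 fun t => (hg t).continuousAt
  have claim1 : ∀ a b : ℝ, 0 ≤ a → a ≤ b → ε ≤ g a → ε ≤ g b := by
    intro a b ha hab hga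
    by_contra hb
    push_neg at hb
    have hab' : a < b := lt_of_le_of_ne hab (by rintro rfl; exact absurd hga (not_le.2 hb))
    set S : Set ℝ := Icc a b ∩ {u | ε ≤ g u} with hS
    have hSne : S.Nonempty := ⟨a, ⟨le_refl a, hab⟩, hga⟩
    have hSbdd : BddAbove S := ⟨b, fun u hu => hu.1.2⟩
    have hScl : IsClosed S := isClosed_Icc.inter (isClosed_le continuous_const hgc)
    have hsS : sSup S ∈ S := hScl.csSup_mem hSne hSbdd
    set s := sSup S
    have hsb : s < b := lt_of_le_of_ne hsS.1.2 (fun h => absurd (h ▸ hsS.2) (not_le.2 hb))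
    have hmono : StrictMonoOn g (Icc s b) := by
      apply strictMonoOn_of_deriv_pos (convex_Icc s b) hgc.continuousOn
      intro u hu
      rw [interior_Icc] at hu
      rw [(hg u).deriv]
      have hu0 : 0 ≤ u := le_trans (le_trans ha hsS.1.1) hu.1.le
      have hgu : g u ≤ ε := by
        by_contra h
        push_neg at h
        have huS : u ∈ S := ⟨⟨le_trans hsS.1.1 hu.1.le, hu.2.le⟩, h.le⟩
        exact absurd (le_csSup hSbdd huS) (not_le.2 hu.1)
      exact lt_of_lt_of_le (div_pos hε hT) (hbound u hu0 hgu)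
    have := hmono (left_mem_Icc.2 hsb.le) (right_mem_Icc.2 hsb.le) hsb
    exact absurd (lt_of_le_of_lt hsS.2 this) (not_lt.2 hb.le)
  have claim2 : ε ≤ g T := by
    by_cases hcase : ∃ u, u ∈ Icc (0:ℝ) T ∧ ε ≤ g u
    · obtain ⟨u, hu, hgu⟩ := hcase
      exact claim1 u T hu.1 hu.2 hgu
    · push_neg at hcase
      have hd : ∀ u : ℝ, HasDerivAt (fun y => g y - ε / T * y) (g' u - ε / T) u := by
        intro u
        have h2 : HasDerivAt (fun y : ℝ => ε / T * y) (ε / T) u := by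
          simpa using (hasDerivAt_id u).const_mul (ε / T)
        exact (hg u).sub h2
      have hmono : MonotoneOn (fun y => g y - ε / T * y) (Icc (0:ℝ) T) := by
        apply monotoneOn_of_deriv_nonneg (f := fun y => g y - ε / T * y) (convex_Icc 0 T)
          ((hgc.sub (continuous_const.mul continuous_id)).continuousOn)
          (fun u _ => (hd u).differentiableAt.differentiableWithinAt)
        intro u hu
        rw [interior_Icc] at hu
        rw [(hd u).deriv]
        have : g u < ε := hcase u ⟨hu.1.le, hu.2.le⟩
        linarith [hbound u hu.1.le this.le]
      have h01 := hmono (left_mem_Icc.2 hT.le) (right_mem_Icc.2 hT.le) hT.le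
      have hTε : ε / T * T = ε := div_mul_cancel₀ ε hT.ne'
      simp only [mul_zero, sub_zero, hTε] at h01
      linarith
  intro t ht
  exact claim1 T t hT.le ht claim2

variable {E' : Type*} [NormedAddCommGroup E'] [NormedSpace ℝ E']

private lemma sdp_zero_transport (g : ℝ → E') (B : ℝ → E' →L[ℝ] E') (hB : Continuous B)
    (hg : ∀ t, HasDerivAt g (B t (g t)) t) {a b : ℝ} (hab : a ≤ b) (ha : g a = 0) :
    g b = 0 := by
  obtain ⟨M, hM⟩ := (isCompact_Icc : IsCompact (Icc a b)).exists_bound_of_continuousOn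
    hB.continuousOn
  have key := norm_le_gronwallBound_of_norm_deriv_right_le (f := g)
    (f' := fun t => B t (g t)) (δ := 0) (K := M) (ε := 0) (a := a) (b := b)
    (fun t _ => (hg t).continuousAt.continuousWithinAt)
    (fun t _ => (hg t).hasDerivWithinAt)
    (by simp [ha])
    (fun t ht => by
      have h1 : ‖B t (g t)‖ ≤ ‖B t‖ * ‖g t‖ := (B t).le_opNorm _
      have h2 : ‖B t‖ * ‖g t‖ ≤ M * ‖g t‖ :=
        mul_le_mul_of_nonneg_right (hM t (Ico_subset_Icc_self ht)) (norm_nonneg _)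
      simpa using le_trans h1 h2)
  have hb := key b (right_mem_Icc.2 hab)
  rw [gronwallBound_ε0_δ0] at hb
  exact norm_le_zero_iff.1 hb

private lemma sdp_nonvanish (g : ℝ → E') (B : ℝ → E' →L[ℝ] E') (hB : Continuous B)
    (hg : ∀ t, HasDerivAt g (B t (g t)) t) (h0 : g 0 ≠ 0) : ∀ s, g s ≠ 0 := by
  intro s hs
  rcases le_total s 0 with h | h
  · exact h0 (sdp_zero_transport g B hB hg h hs)
  · apply h0
    have hrev : ∀ u : ℝ, HasDerivAt (fun u => g (s - u))
        ((-(B (s - u))) (g (s - u))) u := by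
      intro u
      have h1 : HasDerivAt (fun y : ℝ => s - y) (-1) u := (hasDerivAt_id u).const_sub s
      have h2 := (hg (s - u)).scomp u h1
      simpa [neg_smul, Function.comp_def] using h2
    have hBc : Continuous (fun u : ℝ => -(B (s - u))) :=
      (hB.comp (continuous_const.sub continuous_id)).neg
    have := sdp_zero_transport (fun u => g (s - u)) (fun u => -(B (s - u))) hBc hrev h
      (by simpa using hs)
    simpa using this

private lemma sdp_theta_deriv {n : ℕ} (δx : ℝ → EuclideanSpace ℝ (Fin n))
    (A : ℝ → EuclideanSpace ℝ (Fin n) →L[ℝ] EuclideanSpace ℝ (Fin n))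
    (hδx : ∀ t, HasDerivAt δx (A t (δx t)) t) (hne : ∀ t, δx t ≠ 0) (s : ℝ) :
    HasDerivAt (fun u => (‖δx u‖)⁻¹ • δx u)
      (A s ((‖δx s‖)⁻¹ • δx s) -
        (inner ℝ ((‖δx s‖)⁻¹ • δx s) (A s ((‖δx s‖)⁻¹ • δx s)) : ℝ) • ((‖δx s‖)⁻¹ • δx s)) s := by
  have hrpos : ∀ u, 0 < ‖δx u‖ := fun u => norm_pos_iff.2 (hne u)
  set c : ℝ := (inner ℝ (δx s) (A s (δx s)) : ℝ) with hc
  have hr : HasDerivAt (fun u => ‖δx u‖) ((‖δx s‖)⁻¹ * c) s := by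
    have hq : HasDerivAt (fun u => (inner ℝ (δx u) (δx u) : ℝ)) (2 * c) s := by
      have h := (hδx s).inner ℝ (hδx s)
      convert h using 1
      · rfl
      · rfl
      rw [hc, real_inner_comm (A s (δx s)) (δx s)]
      ring
    have hq0 : (inner ℝ (δx s) (δx s) : ℝ) ≠ 0 := by
      rw [real_inner_self_eq_norm_sq]
      exact (pow_pos (hrpos s) 2).ne'
    have h2 := (Real.hasDerivAt_sqrt hq0).comp s hq
    have he : (fun u => ‖δx u‖) = fun u => Real.sqrt (inner ℝ (δx u) (δx u) : ℝ) :=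
      funext fun u => norm_eq_sqrt_real_inner _
    rw [he]
    convert h2 using 1
    · rfl
    · rfl
    · rfl
    rw [← norm_eq_sqrt_real_inner]
    field_simp
  have hinv : HasDerivAt (fun u => (‖δx u‖)⁻¹) (-((‖δx s‖)⁻¹ * c) / (‖δx s‖) ^ 2) s :=
    hr.inv (hrpos s).ne'
  have h1 := hinv.smul (hδx s)
  convert h1 using 1
  · rfl
  · rfl
  · rfl
  · rfl
  rw [map_smul, real_inner_smul_left, real_inner_smul_right]
  simp only [smul_smul]
  rw [sub_eq_add_neg, ← neg_smul]
  congr 1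
  rw [← hc]
  field_simp

end AuxStrictDiffPos

/-- The cone at `x` determined by the cone-field representation functions `K i`:
`K(x) = {0} ∪ {v ≠ 0 : K_i(x,v) ≥ 0 for all i}`. -/
def coneAt {n m : ℕ} (K : Fin m → EuclideanSpace ℝ (Fin n) → EuclideanSpace ℝ (Fin n) → ℝ)
    (x : EuclideanSpace ℝ (Fin n)) : Set (EuclideanSpace ℝ (Fin n)) :=
  insert 0 {v | v ≠ 0 ∧ ∀ i, 0 ≤ K i x v}

/-- **Theorem 2 (strict differential positivity from pointwise geometric conditions).**
Suppose there are `T > 0` and `ε > 0` such that for every `x ∈ C` and every unit vector `θ`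
in the cone `K(x)`, whenever `0 ≤ K_i(x,θ) ≤ ε` the derivative of `K_i` along the normalized
prolonged vector field `(f(x), (Df(x) − ⟨θ, Df(x)θ⟩ I)θ)` is at least `ε/T`. Then the system
is strictly differentially positive on the forward invariant set `C`: for every solution of
the variational equation starting in `K(x(0)) \ {0}`, the normalized solution lies in the
`ε`-subcone `K_ε(x(t))` for all `t ≥ T`. -/
theorem strict_differential_positivity_geometric {n m : ℕ}
    (f : EuclideanSpace ℝ (Fin n) → EuclideanSpace ℝ (Fin n))
    (hf : ContDiff ℝ 2 f)
    (C : Set (EuclideanSpace ℝ (Fin n)))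
    (hC : ∀ x : ℝ → EuclideanSpace ℝ (Fin n),
      (∀ t, HasDerivAt x (f (x t)) t) → x 0 ∈ C → ∀ t, 0 ≤ t → x t ∈ C)
    (K : Fin m → EuclideanSpace ℝ (Fin n) → EuclideanSpace ℝ (Fin n) → ℝ)
    (hKsmooth : ∀ i, ∀ x v : EuclideanSpace ℝ (Fin n), v ≠ 0 →
      DifferentiableAt ℝ
        (fun p : EuclideanSpace ℝ (Fin n) × EuclideanSpace ℝ (Fin n) => K i p.1 p.2) (x, v))
    (hKhom : ∀ i, ∀ x v : EuclideanSpace ℝ (Fin n), v ≠ 0 → ∀ ρ : ℝ, 0 < ρ →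
      K i x (ρ • v) = K i x v)
    (hKclosed : ∀ x, IsClosed (coneAt K x))
    (hKconvex : ∀ x, Convex ℝ (coneAt K x))
    (hKpointed : ∀ x, coneAt K x ∩ (-coneAt K x) = {0})
    (hKsolid : ∀ x, (interior (coneAt K x)).Nonempty)
    (T ε : ℝ) (hT : 0 < T) (hε : 0 < ε)
    (hgeom : ∀ x ∈ C, ∀ θ : EuclideanSpace ℝ (Fin n), ‖θ‖ = 1 → (∀ j, 0 ≤ K j x θ) →
      ∀ i, 0 ≤ K i x θ → K i x θ ≤ ε →
      ε / T ≤ fderiv ℝ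
        (fun p : EuclideanSpace ℝ (Fin n) × EuclideanSpace ℝ (Fin n) => K i p.1 p.2)
        (x, θ) (f x, fderiv ℝ f x θ - (inner ℝ θ (fderiv ℝ f x θ) : ℝ) • θ))
    (x : ℝ → EuclideanSpace ℝ (Fin n))
    (hx : ∀ t, HasDerivAt x (f (x t)) t)
    (hx0 : x 0 ∈ C)
    (δx : ℝ → EuclideanSpace ℝ (Fin n))
    (hδx : ∀ t, HasDerivAt δx (fderiv ℝ f (x t) (δx t)) t)
    (hδx0 : δx 0 ∈ coneAt K (x 0) \ {0}) :
    ∀ t, T ≤ t → ∀ i, ε ≤ K i (x t) (‖δx t‖⁻¹ • δx t) := by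
  classical
  -- continuity of basic data
  have hxc : Continuous x := continuous_iff_continuousAt.2 fun t => (hx t).continuousAt
  set A : ℝ → EuclideanSpace ℝ (Fin n) →L[ℝ] EuclideanSpace ℝ (Fin n) :=
    fun t => fderiv ℝ f (x t) with hA
  have hAc : Continuous A := (hf.continuous_fderiv (by norm_num)).comp hxc
  have hδx' : ∀ t, HasDerivAt δx (A t (δx t)) t := hδx
  -- δx never vanishes
  have hδ0ne : δx 0 ≠ 0 := fun h => hδx0.2 (by simpa using h)
  have hne : ∀ s, δx s ≠ 0 := sdp_nonvanish δx A hAc hδx' hδ0ne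
  have hrpos : ∀ s, 0 < ‖δx s‖ := fun s => norm_pos_iff.2 (hne s)
  -- the normalized solution
  set θ : ℝ → EuclideanSpace ℝ (Fin n) := fun s => (‖δx s‖)⁻¹ • δx s with hθ
  have hθnorm : ∀ s, ‖θ s‖ = 1 := by
    intro s
    rw [hθ]
    simp only [norm_smul, norm_inv, norm_norm]
    exact inv_mul_cancel₀ (hrpos s).ne'
  have hθne : ∀ s, θ s ≠ 0 := by
    intro s h
    have := hθnorm s
    rw [h] at this
    simp at this
  have hθd : ∀ s, HasDerivAt θ
      (A s (θ s) - (inner ℝ (θ s) (A s (θ s)) : ℝ) • θ s) s :=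
    fun s => sdp_theta_deriv δx A hδx' hne s
  -- the functions φ j and their derivatives
  set φ : Fin m → ℝ → ℝ := fun j s => K j (x s) (θ s) with hφ
  set Φ : Fin m → ℝ → ℝ := fun j s =>
    fderiv ℝ (fun p : EuclideanSpace ℝ (Fin n) × EuclideanSpace ℝ (Fin n) => K j p.1 p.2)
      (x s, θ s) (f (x s), A s (θ s) - (inner ℝ (θ s) (A s (θ s)) : ℝ) • θ s) with hΦ
  have hφd : ∀ j s, HasDerivAt (φ j) (Φ j s) s := by
    intro j s
    have hcurve : HasDerivAt (fun u => (x u, θ u))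
        (f (x s), A s (θ s) - (inner ℝ (θ s) (A s (θ s)) : ℝ) • θ s) s := (hx s).prodMk (hθd s)
    exact ((hKsmooth j (x s) (θ s) (hθne s)).hasFDerivAt).comp_hasDerivAt s hcurve
  have hφc : ∀ j, Continuous (φ j) :=
    fun j => continuous_iff_continuousAt.2 fun s => (hφd j s).continuousAt
  -- membership in C
  have hxC : ∀ s, 0 ≤ s → x s ∈ C := hC x hx hx0
  -- the geometric condition, rephrased
  have hkey : ∀ s, 0 ≤ s → (∀ j, 0 ≤ φ j s) → ∀ j, φ j s ≤ ε → ε / T ≤ Φ j s := by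
    intro s hs hposall j hjε
    exact hgeom (x s) (hxC s hs) (θ s) (hθnorm s) hposall j (hposall j) hjε
  -- initial positivity
  have h0pos : ∀ j, 0 ≤ φ j 0 := by
    intro j
    have h1 : δx 0 ∈ coneAt K (x 0) := hδx0.1
    rcases h1 with h | h
    · exact absurd h hδ0ne
    · have := h.2 j
      have heq : K j (x 0) (θ 0) = K j (x 0) (δx 0) :=
        hKhom j (x 0) (δx 0) (hne 0) (‖δx 0‖)⁻¹ (inv_pos.2 (hrpos 0))
      rw [hφ]
      simp only
      rw [heq]
      exact this
  -- invariance: all φ j stay nonnegative on [0, ∞)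
  have hpos : ∀ s, 0 ≤ s → ∀ j, 0 ≤ φ j s := by
    by_contra hcon
    push_neg at hcon
    obtain ⟨s₀, hs₀, j₀, hj₀⟩ := hcon
    set B : Set ℝ := {s | 0 ≤ s ∧ ∃ j, φ j s < 0} with hB
    have hBne : B.Nonempty := ⟨s₀, hs₀, j₀, hj₀⟩
    have hBbdd : BddBelow B := ⟨0, fun u hu => hu.1⟩
    set t₀ := sInf B with ht₀
    have ht₀0 : 0 ≤ t₀ := le_csInf hBne fun u hu => hu.1
    have hnotB : ∀ u, 0 ≤ u → u < t₀ → ∀ j, 0 ≤ φ j u := by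
      intro u hu hut j
      by_contra h
      exact absurd (csInf_le hBbdd ⟨hu, j, not_le.1 h⟩) (not_le.2 hut)
    have ht₀pos : ∀ j, 0 ≤ φ j t₀ := by
      intro j
      rcases eq_or_lt_of_le ht₀0 with h | h
      · rw [← h]; exact h0pos j
      · have hsub : Ico (0:ℝ) t₀ ⊆ {u | 0 ≤ φ j u} := fun u hu => hnotB u hu.1 hu.2 j
        have hclsub := closure_mono hsub
        rw [closure_Ico h.ne] at hclsub
        have hcl : closure {u | 0 ≤ φ j u} = {u | 0 ≤ φ j u} :=
          (isClosed_le continuous_const (hφc j)).closure_eq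
        rw [hcl] at hclsub
        exact hclsub (right_mem_Icc.2 ht₀0)
    have hBIoi : B ⊆ Ioi t₀ := by
      intro u hu
      rcases lt_or_eq_of_le (csInf_le hBbdd hu) with h | h
      · exact h
      · exfalso
        obtain ⟨j, hj⟩ := hu.2
        rw [← h] at hj
        exact absurd (ht₀pos j) (not_le.2 hj)
    have hev : ∀ j, ∀ᶠ s in nhdsWithin t₀ (Ioi t₀), 0 < φ j s := by
      intro j
      rcases le_or_gt (φ j t₀) ε with hle | hlt
      · -- derivative is positive; strictly increasing to the right
        have hd : 0 < Φ j t₀ :=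
          lt_of_lt_of_le (div_pos hε hT) (hkey t₀ ht₀0 ht₀pos j hle)
        have hslope := hasDerivAt_iff_tendsto_slope.1 (hφd j t₀)
        have h1 : ∀ᶠ s in nhdsWithin t₀ {t₀}ᶜ, 0 < slope (φ j) t₀ s :=
          hslope.eventually (eventually_gt_nhds hd)
        have h2 : nhdsWithin t₀ (Ioi t₀) ≤ nhdsWithin t₀ {t₀}ᶜ :=
          nhdsWithin_mono t₀ (fun u hu => ne_of_gt hu)
        filter_upwards [h1.filter_mono h2, self_mem_nhdsWithin] with s hs hs'
        have hst : (0:ℝ) < s - t₀ := sub_pos.2 hs'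
        have : 0 < (φ j s - φ j t₀) / (s - t₀) := by
          simpa [slope_def_field, div_eq_inv_mul] using hs
        have h3 : 0 < φ j s - φ j t₀ := by
          by_contra hcon2
          push_neg at hcon2
          nlinarith [div_nonpos_of_nonpos_of_nonneg hcon2 hst.le]
        linarith [ht₀pos j]
      · -- φ j t₀ > ε > 0 : continuity
        have : ∀ᶠ s in nhds t₀, 0 < φ j s :=
          (hφc j).continuousAt.eventually_mem (Ioi_mem_nhds (lt_trans hε hlt) : Ioi (0:ℝ) ∈ _)
        exact this.filter_mono nhdsWithin_le_nhds
    have hall : ∀ᶠ s in nhdsWithin t₀ (Ioi t₀), ∀ j, 0 < φ j s := Filter.eventually_all.2 hev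
    have ht₀cl : t₀ ∈ closure B := csInf_mem_closure hBne hBbdd
    have hNB : Filter.NeBot (nhdsWithin t₀ B) := mem_closure_iff_nhdsWithin_neBot.1 ht₀cl
    have hle' : nhdsWithin t₀ B ≤ nhdsWithin t₀ (Ioi t₀) := nhdsWithin_mono t₀ hBIoi
    have hall' : ∀ᶠ s in nhdsWithin t₀ B, ∀ j, 0 < φ j s := hall.filter_mono hle'
    have hmem : ∀ᶠ s in nhdsWithin t₀ B, s ∈ B := self_mem_nhdsWithin
    obtain ⟨s, hs1, hs2⟩ := (hall'.and hmem).exists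
    obtain ⟨j, hj⟩ := hs2.2
    exact absurd (hs1 j) (not_lt.2 hj.le)
  -- quantitative growth: apply the scalar lemma to each φ i
  intro t ht i
  have hbound : ∀ s, 0 ≤ s → φ i s ≤ ε → ε / T ≤ Φ i s :=
    fun s hs hsε => hkey s hs (hpos s hs) i hsε
  have := sdp_scalar_reach hT hε (hφd i) (h0pos i) hbound t ht
  exact this
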